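/- arXiv:1403.1768 — 4 statements merged into one kernel-verified Lean document; each statement's English description precedes it below -/
import Mathlib

section
/- For every real ε > 0, every finite simple graph G = (V,E) admits a partition P of its vertex set into at most T(⌊ε^{-2}/16⌋ + 2) nonempty parts such that irreg(P) ≤ ε|V|². -/
open Finset

/-- The tower function: `tower 0 = 1`, `tower (n+1) = 2 ^ tower n`, so `tower 1 = 2`. -/
def tower : ℕ → ℕ
  | 0 => 1
  | n + 1 => 2 ^ tower n

open scoped Classical in
/-- The number of ordered pairs `(x,y) ∈ X × Y` that are edges of `G`. -/
noncomputable def edgeCount {V : Type*} [Fintype V] (G : SimpleGraph V) (X Y : Finset V) : ℝ :=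
  ∑ x ∈ X, ∑ y ∈ Y, if G.Adj x y then (1 : ℝ) else 0

/-- The edge density between `X` and `Y`. -/
noncomputable def density {V : Type*} [Fintype V] (G : SimpleGraph V) (X Y : Finset V) : ℝ :=
  edgeCount G X Y / ((X.card : ℝ) * (Y.card : ℝ))

/-- The irregularity of the pair `X, Y`. -/
noncomputable def irregPair {V : Type*} [Fintype V] [DecidableEq V] (G : SimpleGraph V)
    (X Y : Finset V) : ℝ :=
  (X.powerset ×ˢ Y.powerset).sup'
    ⟨(∅, ∅), by simp⟩
    (fun UW => |edgeCount G UW.1 UW.2 - (UW.1.card : ℝ) * (UW.2.card : ℝ) * density G X Y|)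

/-- The irregularity of a vertex partition. -/
noncomputable def irregPartition {V : Type*} [Fintype V] [DecidableEq V] (G : SimpleGraph V)
    (P : Finset (Finset V)) : ℝ :=
  ∑ X ∈ P, ∑ Y ∈ P, irregPair G X Y

/-- `P` is a partition of the vertex set into nonempty parts. -/
def IsPartition {V : Type*} [Fintype V] [DecidableEq V] (P : Finset (Finset V)) : Prop :=
  (∀ p ∈ P, p.Nonempty) ∧ (∀ p ∈ P, ∀ q ∈ P, p ≠ q → Disjoint p q) ∧
    P.biUnion id = Finset.univ


/-! ### Auxiliary lemmas -/

lemma tower_succ (n : ℕ) : tower (n+1) = 2 ^ tower n := rfl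

lemma tower_ge_four (b : ℕ) : 4 ≤ tower (b + 2) := by
  induction b with
  | zero => simp [tower]
  | succ n ih =>
      calc (4:ℕ) = 2 ^ 2 := rfl
      _ ≤ 2 ^ tower (n+2) := Nat.pow_le_pow_right (by norm_num) (by omega)
      _ = tower (n + 1 + 2) := rfl

lemma tower_mono : Monotone tower := by
  apply monotone_nat_of_le_succ
  intro n
  exact (Nat.lt_two_pow_self (n := tower n)).le

lemma two_mul_le_two_pow {m : ℕ} (h : 2 ≤ m) : 2 * m ≤ 2 ^ m := by
  induction m with
  | zero => omega
  | succ n ih =>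
      rcases Nat.lt_or_ge n 2 with h2 | h2
      · interval_cases n <;> norm_num
      · have := ih h2
        have h1 : 1 ≤ 2 ^ n := Nat.one_le_two_pow
        calc 2 * (n+1) = 2*n + 2 := by ring
        _ ≤ 2^n + 2^n := by omega
        _ = 2 ^ (n+1) := by ring

lemma card_step {k t : ℕ} (h : 4 * k ≤ t) : 4 * (k * 4 ^ k) ≤ 2 ^ t := by
  rcases Nat.eq_zero_or_pos k with rfl | hk
  · simpa using Nat.one_le_two_pow
  · have h1 : 4 * k ≤ 2 ^ (2 * k) := by
      have := two_mul_le_two_pow (m := 2 * k) (by omega)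
      calc 4 * k = 2 * (2 * k) := by ring
      _ ≤ 2 ^ (2 * k) := this
    calc 4 * (k * 4 ^ k) = (4 * k) * 4 ^ k := by ring
    _ ≤ 2 ^ (2*k) * 4 ^ k := Nat.mul_le_mul_right _ h1
    _ = 2 ^ (4 * k) := by rw [show (4:ℕ)^k = 2^(2*k) by rw [pow_mul]; norm_num, ← pow_add]; ring_nf
    _ ≤ 2 ^ t := Nat.pow_le_pow_right (by norm_num) h


section RegAux
set_option linter.unusedSectionVars false
set_option linter.unusedVariables false
open scoped Classical
variable {V : Type*} [Fintype V] [DecidableEq V]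

lemma edgeCount_nonneg (G : SimpleGraph V) (X Y : Finset V) : 0 ≤ edgeCount G X Y := by
  unfold edgeCount
  refine Finset.sum_nonneg fun x _ => Finset.sum_nonneg fun y _ => ?_
  split <;> norm_num

lemma edgeCount_le (G : SimpleGraph V) (X Y : Finset V) :
    edgeCount G X Y ≤ (X.card : ℝ) * Y.card := by
  unfold edgeCount
  calc (∑ x ∈ X, ∑ y ∈ Y, if G.Adj x y then (1:ℝ) else 0)
      ≤ ∑ x ∈ X, ∑ y ∈ Y, (1:ℝ) := by
        refine Finset.sum_le_sum fun x _ => Finset.sum_le_sum fun y _ => ?_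
        split <;> norm_num
  _ = (X.card : ℝ) * Y.card := by simp [mul_comm]

def PartsOf (𝒜 : Finset (Finset V)) (X : Finset V) : Prop :=
  (∀ a ∈ 𝒜, a.Nonempty) ∧ ((𝒜 : Set (Finset V)).PairwiseDisjoint id) ∧ 𝒜.biUnion id = X

lemma PartsOf.sum_card {𝒜 : Finset (Finset V)} {X : Finset V} (h : PartsOf 𝒜 X) :
    ∑ a ∈ 𝒜, (a.card : ℝ) = X.card := by
  rw [← h.2.2]
  rw [Finset.card_biUnion]
  · push_cast; rfl
  · intro a ha b hb hab
    exact h.2.1 ha hb hab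

lemma edgeCount_left_split (G : SimpleGraph V) {𝒜 : Finset (Finset V)} {X : Finset V}
    (h : PartsOf 𝒜 X) (Y : Finset V) :
    edgeCount G X Y = ∑ a ∈ 𝒜, edgeCount G a Y := by
  unfold edgeCount
  rw [← h.2.2]
  exact Finset.sum_biUnion h.2.1

lemma edgeCount_right_split (G : SimpleGraph V) (X : Finset V) {ℬ : Finset (Finset V)}
    {Y : Finset V} (h : PartsOf ℬ Y) :
    edgeCount G X Y = ∑ b ∈ ℬ, edgeCount G X b := by
  unfold edgeCount
  rw [← h.2.2]
  calc (∑ x ∈ X, ∑ y ∈ ℬ.biUnion id, if G.Adj x y then (1:ℝ) else 0)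
      = ∑ x ∈ X, ∑ b ∈ ℬ, ∑ y ∈ b, (if G.Adj x y then (1:ℝ) else 0) :=
        Finset.sum_congr rfl fun x _ => Finset.sum_biUnion h.2.1
  _ = ∑ b ∈ ℬ, ∑ x ∈ X, ∑ y ∈ b, (if G.Adj x y then (1:ℝ) else 0) := Finset.sum_comm

lemma edgeCount_empty_left (G : SimpleGraph V) (Y : Finset V) : edgeCount G ∅ Y = 0 := by
  simp [edgeCount]

lemma irregPair_nonneg (G : SimpleGraph V) (X Y : Finset V) : 0 ≤ irregPair G X Y := by
  unfold irregPair
  have hmem : ((∅, ∅) : Finset V × Finset V) ∈ X.powerset ×ˢ Y.powerset := by simp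
  refine le_trans ?_ (Finset.le_sup' _ hmem)
  simp [edgeCount]

lemma exists_witness (G : SimpleGraph V) (X Y : Finset V) :
    ∃ U W : Finset V, U ⊆ X ∧ W ⊆ Y ∧
      |edgeCount G U W - (U.card : ℝ) * W.card * density G X Y| = irregPair G X Y := by
  obtain ⟨p, hp, hval⟩ := Finset.exists_mem_eq_sup' (s := X.powerset ×ˢ Y.powerset)
    ⟨(∅, ∅), by simp⟩
    (fun UW => |edgeCount G UW.1 UW.2 - (UW.1.card : ℝ) * (UW.2.card : ℝ) * density G X Y|)
  rw [Finset.mem_product, Finset.mem_powerset, Finset.mem_powerset] at hp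
  exact ⟨p.1, p.2, hp.1, hp.2, hval.symm⟩

/-- the witness bound: irregPair dominates every deviation -/
lemma dev_le_irregPair (G : SimpleGraph V) {X Y U W : Finset V} (hU : U ⊆ X) (hW : W ⊆ Y) :
    |edgeCount G U W - (U.card : ℝ) * W.card * density G X Y| ≤ irregPair G X Y := by
  unfold irregPair
  exact Finset.le_sup' (f := fun UW : Finset V × Finset V =>
    |edgeCount G UW.1 UW.2 - (UW.1.card : ℝ) * (UW.2.card : ℝ) * density G X Y|)
    (b := (U, W)) (by simp [Finset.mem_product, hU, hW])



noncomputable def cellOf (S : Finset (Finset V)) (X : Finset V) (v : V) : Finset V :=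
  X.filter fun w => ∀ A ∈ S, (w ∈ A ↔ v ∈ A)

noncomputable def cells (S : Finset (Finset V)) (X : Finset V) : Finset (Finset V) :=
  X.image (cellOf S X)

lemma mem_cellOf {S : Finset (Finset V)} {X : Finset V} {v w : V} :
    w ∈ cellOf S X v ↔ w ∈ X ∧ ∀ A ∈ S, (w ∈ A ↔ v ∈ A) := by
  simp [cellOf]

lemma mem_cellOf_self {S : Finset (Finset V)} {X : Finset V} {v : V} (hv : v ∈ X) :
    v ∈ cellOf S X v := mem_cellOf.2 ⟨hv, fun _ _ => Iff.rfl⟩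

lemma cellOf_subset {S : Finset (Finset V)} {X : Finset V} {v : V} : cellOf S X v ⊆ X :=
  Finset.filter_subset _ _

lemma cellOf_eq_of_sig {S : Finset (Finset V)} {X : Finset V} {v w : V}
    (h : ∀ A ∈ S, (w ∈ A ↔ v ∈ A)) : cellOf S X w = cellOf S X v := by
  ext u
  simp only [mem_cellOf]
  exact and_congr_right fun _ => forall₂_congr fun A hA => iff_congr Iff.rfl (h A hA)

lemma cellOf_eq_of_mem {S : Finset (Finset V)} {X : Finset V} {v w : V}
    (hw : w ∈ cellOf S X v) : cellOf S X w = cellOf S X v :=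
  cellOf_eq_of_sig (mem_cellOf.1 hw).2

lemma cells_nonempty {S : Finset (Finset V)} {X : Finset V} {c : Finset V}
    (hc : c ∈ cells S X) : c.Nonempty := by
  obtain ⟨v, hv, rfl⟩ := Finset.mem_image.1 hc
  exact ⟨v, mem_cellOf_self hv⟩

lemma cells_subset {S : Finset (Finset V)} {X : Finset V} {c : Finset V}
    (hc : c ∈ cells S X) : c ⊆ X := by
  obtain ⟨v, hv, rfl⟩ := Finset.mem_image.1 hc
  exact cellOf_subset

lemma cells_disjoint {S : Finset (Finset V)} {X : Finset V} {c c' : Finset V}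
    (hc : c ∈ cells S X) (hc' : c' ∈ cells S X) (hne : c ≠ c') : Disjoint c c' := by
  obtain ⟨v, hv, rfl⟩ := Finset.mem_image.1 hc
  obtain ⟨w, hw, rfl⟩ := Finset.mem_image.1 hc'
  rw [Finset.disjoint_left]
  intro u hu hu'
  exact hne ((cellOf_eq_of_mem hu).symm.trans (cellOf_eq_of_mem hu'))

lemma cells_pairwiseDisjoint (S : Finset (Finset V)) (X : Finset V) :
    ((cells S X : Set (Finset V))).PairwiseDisjoint id :=
  fun c hc c' hc' hne => cells_disjoint hc hc' hne

lemma cells_biUnion (S : Finset (Finset V)) (X : Finset V) : (cells S X).biUnion id = X := by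
  apply Finset.Subset.antisymm
  · intro u hu
    rw [Finset.mem_biUnion] at hu
    obtain ⟨c, hc, hu⟩ := hu
    exact cells_subset hc hu
  · intro v hv
    rw [Finset.mem_biUnion]
    exact ⟨cellOf S X v, Finset.mem_image_of_mem _ hv, mem_cellOf_self hv⟩

lemma cells_respect {S : Finset (Finset V)} {X : Finset V} {A c : Finset V}
    (hA : A ∈ S) (hc : c ∈ cells S X) : c ⊆ A ∨ Disjoint c A := by
  obtain ⟨v, hv, rfl⟩ := Finset.mem_image.1 hc
  by_cases hvA : v ∈ A
  · left
    intro w hw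
    exact ((mem_cellOf.1 hw).2 A hA).2 hvA
  · right
    rw [Finset.disjoint_left]
    intro w hw hwA
    exact hvA (((mem_cellOf.1 hw).2 A hA).1 hwA)

lemma cells_card (S : Finset (Finset V)) (X : Finset V) : (cells S X).card ≤ 2 ^ S.card := by
  have : (cells S X).card ≤ S.powerset.card := by
    apply Finset.card_le_card_of_injOn (fun c => S.filter (fun A => c ⊆ A))
    · intro c _; simp [Finset.mem_powerset]; exact fun x hx => hx.1
    · intro c hc c' hc' hsig
      obtain ⟨v, hv, rfl⟩ := Finset.mem_image.1 hc
      obtain ⟨w, hw, rfl⟩ := Finset.mem_image.1 hc'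
      have key : ∀ (u : V), u ∈ X → ∀ (A : Finset V), A ∈ S →
          (cellOf S X u ⊆ A ↔ u ∈ A) := by
        intro u hu A hA
        constructor
        · intro h; exact h (mem_cellOf_self hu)
        · intro h x hx; exact ((mem_cellOf.1 hx).2 A hA).2 h
      have hiff : ∀ A ∈ S, (cellOf S X v ⊆ A ↔ cellOf S X w ⊆ A) := by
        intro A hA
        have := Finset.ext_iff.1 hsig A
        simp only [Finset.mem_filter] at this
        exact ⟨fun h => (this.1 ⟨hA, h⟩).2, fun h => (this.2 ⟨hA, h⟩).2⟩
      apply cellOf_eq_of_sig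
      intro A hA
      rw [← key v hv A hA, ← key w hw A hA]
      exact hiff A hA
  simpa [Finset.card_powerset] using this

/-- A cutter `A ∈ S`, `A ⊆ X`, is partitioned by the cells inside it. -/
lemma partsOf_filter_cells {S : Finset (Finset V)} {X A : Finset V} (hA : A ∈ S) (hAX : A ⊆ X) :
    ((cells S X).filter (fun c => c ⊆ A)).biUnion id = A := by
  apply Finset.Subset.antisymm
  · intro u hu
    rw [Finset.mem_biUnion] at hu
    obtain ⟨c, hc, hu⟩ := hu
    exact (Finset.mem_filter.1 hc).2 hu
  · intro v hv
    have hvX : v ∈ X := hAX hv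
    have hsub : cellOf S X v ⊆ A := by
      rcases cells_respect hA (Finset.mem_image_of_mem _ hvX) with h | h
      · exact h
      · exact absurd hv (Finset.disjoint_left.1 h (mem_cellOf_self hvX))
    rw [Finset.mem_biUnion]
    exact ⟨cellOf S X v, Finset.mem_filter.2 ⟨Finset.mem_image_of_mem _ hvX, hsub⟩,
      mem_cellOf_self hvX⟩



lemma PartsOf.restrict {𝒜 : Finset (Finset V)} {X U : Finset V} (h : PartsOf 𝒜 X)
    (hsplit : ∀ a ∈ 𝒜, a ⊆ U ∨ Disjoint a U) (hU : U ⊆ X) :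
    PartsOf (𝒜.filter (fun a => a ⊆ U)) U := by
  refine ⟨fun a ha => h.1 a (Finset.mem_filter.1 ha).1,
    h.2.1.subset (by intro a ha; exact (Finset.mem_filter.1 (by exact_mod_cast ha)).1), ?_⟩
  apply Finset.Subset.antisymm
  · intro u hu
    rw [Finset.mem_biUnion] at hu
    obtain ⟨a, ha, hu⟩ := hu
    exact (Finset.mem_filter.1 ha).2 hu
  · intro v hv
    have hvX : v ∈ X := hU hv
    rw [← h.2.2, Finset.mem_biUnion] at hvX
    obtain ⟨a, ha, hva⟩ := hvX
    have haU : a ⊆ U := by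
      rcases hsplit a ha with h' | h'
      · exact h'
      · exact absurd hv (Finset.disjoint_left.1 h' hva)
    rw [Finset.mem_biUnion]
    exact ⟨a, Finset.mem_filter.2 ⟨ha, haU⟩, hva⟩

lemma edgeCount_double (G : SimpleGraph V) {𝒜 ℬ : Finset (Finset V)} {X Y : Finset V}
    (hA : PartsOf 𝒜 X) (hB : PartsOf ℬ Y) :
    edgeCount G X Y = ∑ a ∈ 𝒜, ∑ b ∈ ℬ, edgeCount G a b := by
  rw [edgeCount_left_split G hA]
  exact Finset.sum_congr rfl fun a _ => edgeCount_right_split G a hB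

/-- The key per-pair energy gain estimate. -/
lemma pair_gain (G : SimpleGraph V) {X Y : Finset V} (hX : X.Nonempty) (hY : Y.Nonempty)
    {𝒜 ℬ : Finset (Finset V)} (hA : PartsOf 𝒜 X) (hB : PartsOf ℬ Y)
    {U W : Finset V} (hU : U ⊆ X) (hW : W ⊆ Y)
    (hAU : ∀ a ∈ 𝒜, a ⊆ U ∨ Disjoint a U) (hBW : ∀ b ∈ ℬ, b ⊆ W ∨ Disjoint b W) :
    (edgeCount G X Y)^2 / ((X.card : ℝ) * Y.card)
      + (2 * |edgeCount G U W - (U.card : ℝ) * W.card * density G X Y|)^2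
          / ((X.card : ℝ) * Y.card)
    ≤ ∑ a ∈ 𝒜, ∑ b ∈ ℬ, (edgeCount G a b)^2 / ((a.card : ℝ) * b.card) := by
  set d := density G X Y with hd
  set s : Finset V × Finset V → ℝ := fun p => (p.1.card : ℝ) * p.2.card with hs
  set D : Finset V × Finset V → ℝ := fun p => edgeCount G p.1 p.2 - s p * d with hD
  have hXY : (0:ℝ) < (X.card : ℝ) * Y.card := by
    have := hX.card_pos; have := hY.card_pos; positivity
  have hspos : ∀ p ∈ 𝒜 ×ˢ ℬ, 0 < s p := by
    rintro ⟨a, b⟩ hp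
    rw [Finset.mem_product] at hp
    have := (hA.1 a hp.1).card_pos
    have := (hB.1 b hp.2).card_pos
    simp only [hs]
    positivity
  have hsum_s : ∑ p ∈ 𝒜 ×ˢ ℬ, s p = (X.card : ℝ) * Y.card := by
    rw [Finset.sum_product]
    simp only [hs]
    rw [← Finset.sum_mul_sum]
    rw [hA.sum_card, hB.sum_card]
  have hsum_e : ∑ p ∈ 𝒜 ×ˢ ℬ, edgeCount G p.1 p.2 = edgeCount G X Y := by
    rw [Finset.sum_product]
    exact (edgeCount_double G hA hB).symm
  have hsum_D : ∑ p ∈ 𝒜 ×ˢ ℬ, D p = 0 := by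
    simp only [hD]
    rw [Finset.sum_sub_distrib, hsum_e, ← Finset.sum_mul, hsum_s, hd]
    unfold density
    field_simp
    ring
  -- main identity
  have hident : ∑ p ∈ 𝒜 ×ˢ ℬ, (edgeCount G p.1 p.2)^2 / s p
      = (edgeCount G X Y)^2 / ((X.card : ℝ) * Y.card) + ∑ p ∈ 𝒜 ×ˢ ℬ, (D p)^2 / s p := by
    have hpt : ∀ p ∈ 𝒜 ×ˢ ℬ, (edgeCount G p.1 p.2)^2 / s p
        = (D p)^2 / s p + 2 * d * D p + d^2 * s p := by
      intro p hp
      have h0 := (hspos p hp).ne'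
      have : edgeCount G p.1 p.2 = D p + s p * d := by simp [hD]
      rw [this]
      field_simp
      ring
    rw [Finset.sum_congr rfl hpt]
    rw [Finset.sum_add_distrib, Finset.sum_add_distrib, ← Finset.mul_sum, hsum_D,
      ← Finset.mul_sum, hsum_s]
    have : d^2 * ((X.card : ℝ) * Y.card) = (edgeCount G X Y)^2 / ((X.card : ℝ) * Y.card) := by
      rw [hd]; unfold density; field_simp
    rw [this]; ring
  -- Cauchy-Schwarz
  have hCS : (∑ p ∈ 𝒜 ×ˢ ℬ, |D p|)^2
      ≤ (∑ p ∈ 𝒜 ×ˢ ℬ, (D p)^2 / s p) * ((X.card : ℝ) * Y.card) := by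
    have := Finset.sum_mul_sq_le_sq_mul_sq (𝒜 ×ˢ ℬ)
      (fun p => |D p| / Real.sqrt (s p)) (fun p => Real.sqrt (s p))
    have heq : ∀ p ∈ 𝒜 ×ˢ ℬ, |D p| / Real.sqrt (s p) * Real.sqrt (s p) = |D p| := by
      intro p hp
      have := hspos p hp
      rw [div_mul_cancel₀]
      exact (Real.sqrt_ne_zero'.2 this)
    have heq2 : ∀ p ∈ 𝒜 ×ˢ ℬ, (|D p| / Real.sqrt (s p))^2 = (D p)^2 / s p := by
      intro p hp
      have h1 := (hspos p hp).le
      rw [div_pow, sq_abs, Real.sq_sqrt h1]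
    have heq3 : ∀ p ∈ 𝒜 ×ˢ ℬ, (Real.sqrt (s p))^2 = s p := by
      intro p hp
      exact Real.sq_sqrt (hspos p hp).le
    rw [Finset.sum_congr rfl heq, Finset.sum_congr rfl heq2, Finset.sum_congr rfl heq3,
      hsum_s] at this
    exact this
  -- lower bound on the sum of |D|
  have hlow : 2 * |edgeCount G U W - (U.card : ℝ) * W.card * d| ≤ ∑ p ∈ 𝒜 ×ˢ ℬ, |D p| := by
    set T : Finset (Finset V × Finset V) :=
      (𝒜.filter (fun a => a ⊆ U)) ×ˢ (ℬ.filter (fun b => b ⊆ W)) with hT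
    have hTsub : T ⊆ 𝒜 ×ˢ ℬ := by
      apply Finset.product_subset_product <;> exact Finset.filter_subset _ _
    have hAU' := hA.restrict hAU hU
    have hBW' := hB.restrict hBW hW
    have hTsum : ∑ p ∈ T, D p = edgeCount G U W - (U.card : ℝ) * W.card * d := by
      simp only [hD, hT]
      rw [Finset.sum_sub_distrib]
      congr 1
      · rw [Finset.sum_product]
        exact (edgeCount_double G hAU' hBW').symm
      · rw [← Finset.sum_mul, Finset.sum_product]
        simp only [hs]
        rw [← Finset.sum_mul_sum]
        rw [hAU'.sum_card, hBW'.sum_card]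
    have hsplit := (Finset.sum_sdiff hTsub (f := D))
    have hDsdiff : ∑ p ∈ (𝒜 ×ˢ ℬ) \ T, D p = -(∑ p ∈ T, D p) := by
      have := hsum_D
      linarith [hsplit]
    calc 2 * |edgeCount G U W - (U.card : ℝ) * W.card * d|
        = |∑ p ∈ T, D p| + |∑ p ∈ (𝒜 ×ˢ ℬ) \ T, D p| := by
          rw [hTsum, hDsdiff, abs_neg, hTsum]; ring
    _ ≤ (∑ p ∈ T, |D p|) + ∑ p ∈ (𝒜 ×ˢ ℬ) \ T, |D p| := by
          gcongr <;> exact Finset.abs_sum_le_sum_abs _ _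
    _ = ∑ p ∈ 𝒜 ×ˢ ℬ, |D p| := by
          rw [add_comm]; exact Finset.sum_sdiff hTsub
  -- combine
  have habs : (0:ℝ) ≤ 2 * |edgeCount G U W - (U.card : ℝ) * W.card * d| := by positivity
  have hsq : (2 * |edgeCount G U W - (U.card : ℝ) * W.card * d|)^2
      ≤ (∑ p ∈ 𝒜 ×ˢ ℬ, |D p|)^2 := by
    exact pow_le_pow_left₀ habs hlow 2
  have hfinal : (2 * |edgeCount G U W - (U.card : ℝ) * W.card * d|)^2 / ((X.card : ℝ) * Y.card)
      ≤ ∑ p ∈ 𝒜 ×ˢ ℬ, (D p)^2 / s p := by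
    rw [div_le_iff₀ hXY]
    calc (2 * |edgeCount G U W - (U.card : ℝ) * W.card * d|)^2
        ≤ (∑ p ∈ 𝒜 ×ˢ ℬ, |D p|)^2 := hsq
    _ ≤ (∑ p ∈ 𝒜 ×ˢ ℬ, (D p)^2 / s p) * ((X.card : ℝ) * Y.card) := hCS
  have : ∑ a ∈ 𝒜, ∑ b ∈ ℬ, (edgeCount G a b)^2 / ((a.card : ℝ) * b.card)
      = ∑ p ∈ 𝒜 ×ˢ ℬ, (edgeCount G p.1 p.2)^2 / s p := by
    rw [Finset.sum_product]
  rw [this, hident]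
  linarith


end RegAux

section Step
set_option linter.unusedSectionVars false
set_option linter.unusedVariables false
open scoped Classical
variable {V : Type*} [Fintype V] [DecidableEq V]

noncomputable def energy (G : SimpleGraph V) (P : Finset (Finset V)) : ℝ :=
  ∑ X ∈ P, ∑ Y ∈ P, (edgeCount G X Y)^2 / ((X.card : ℝ) * Y.card)

lemma cs_aux {ι : Type*} (s : Finset ι) (f g : ι → ℝ) (hf : ∀ i ∈ s, 0 ≤ f i)
    (hg : ∀ i ∈ s, 0 < g i) :
    (∑ i ∈ s, f i)^2 / (∑ i ∈ s, g i) ≤ ∑ i ∈ s, (f i)^2 / g i := by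
  rcases s.eq_empty_or_nonempty with rfl | hs
  · simp
  · have hgs : 0 < ∑ i ∈ s, g i := Finset.sum_pos hg hs
    rw [div_le_iff₀ hgs]
    have hmain := Finset.sum_mul_sq_le_sq_mul_sq s (fun i => f i / Real.sqrt (g i))
      (fun i => Real.sqrt (g i))
    have heq : ∀ i ∈ s, f i / Real.sqrt (g i) * Real.sqrt (g i) = f i := by
      intro i hi
      exact div_mul_cancel₀ _ (Real.sqrt_ne_zero'.2 (hg i hi))
    have heq2 : ∀ i ∈ s, (f i / Real.sqrt (g i))^2 = (f i)^2 / g i := by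
      intro i hi
      rw [div_pow, Real.sq_sqrt (hg i hi).le]
    have heq3 : ∀ i ∈ s, (Real.sqrt (g i))^2 = g i := fun i hi => Real.sq_sqrt (hg i hi).le
    rw [Finset.sum_congr rfl heq, Finset.sum_congr rfl heq2, Finset.sum_congr rfl heq3] at hmain
    exact hmain

lemma IsPartition.partsOf {P : Finset (Finset V)} (hP : IsPartition P) :
    PartsOf P (univ : Finset V) :=
  ⟨hP.1, fun a ha b hb hab => hP.2.1 a (by exact_mod_cast ha) b (by exact_mod_cast hb) hab,
    hP.2.2⟩

lemma IsPartition.sum_card {P : Finset (Finset V)} (hP : IsPartition P) :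
    ∑ X ∈ P, (X.card : ℝ) = (Fintype.card V : ℝ) := by
  have := hP.partsOf.sum_card
  simpa using this

lemma step_lemma (G : SimpleGraph V) {P : Finset (Finset V)} (hP : IsPartition P) {ε : ℝ}
    (hε : 0 < ε)
    (hirr : ε * (Fintype.card V : ℝ)^2 < irregPartition G P) :
    ∃ Q, IsPartition Q ∧ Q.card ≤ P.card * 4 ^ P.card ∧
      energy G P + 4 * ε^2 * (Fintype.card V : ℝ)^2 < energy G Q := by
  have hPne : P.Nonempty := by
    rcases P.eq_empty_or_nonempty with rfl | h
    · exfalso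
      have h0 : irregPartition G (∅ : Finset (Finset V)) = 0 := by simp [irregPartition]
      have h1 : (0:ℝ) ≤ ε * (Fintype.card V : ℝ)^2 := by positivity
      rw [h0] at hirr
      linarith
    · exact h
  have hn : 0 < Fintype.card V := by
    obtain ⟨X, hX⟩ := hPne
    obtain ⟨v, hv⟩ := hP.1 X hX
    exact Fintype.card_pos_iff.2 ⟨v⟩
  have hnR : (0:ℝ) < (Fintype.card V : ℝ)^2 := by positivity
  choose u w hu hw hval using fun (X Y : Finset V) => exists_witness G X Y
  set S : Finset V → Finset (Finset V) :=
    fun X => (P.image (fun Y => u X Y)) ∪ (P.image (fun Y => w Y X)) with hS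
  set cellsOf : Finset V → Finset (Finset V) := fun X => cells (S X) X with hcells
  set Q : Finset (Finset V) := P.biUnion cellsOf with hQ
  have hparts : ∀ X, PartsOf (cellsOf X) X := by
    intro X
    exact ⟨fun c hc => cells_nonempty hc, cells_pairwiseDisjoint _ _, cells_biUnion _ _⟩
  have hfam : (P : Set (Finset V)).PairwiseDisjoint cellsOf := by
    intro X hX X' hX' hne
    rw [Function.onFun, Finset.disjoint_left]
    intro c hc hc'
    obtain ⟨v, hv⟩ := cells_nonempty hc
    have h1 : c ⊆ X := cells_subset hc
    have h2 : c ⊆ X' := cells_subset hc'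
    have hd := hP.2.1 X (by exact_mod_cast hX) X' (by exact_mod_cast hX') hne
    exact Finset.disjoint_left.1 hd (h1 hv) (h2 hv)
  have hQpart : IsPartition Q := by
    refine ⟨?_, ?_, ?_⟩
    · intro c hc
      rw [hQ, Finset.mem_biUnion] at hc
      obtain ⟨X, _, hc⟩ := hc
      exact cells_nonempty hc
    · intro c hc c' hc' hne
      rw [hQ, Finset.mem_biUnion] at hc hc'
      obtain ⟨X, hX, hc⟩ := hc
      obtain ⟨X', hX', hc'⟩ := hc'
      by_cases hXX : X = X'
      · subst hXX
        exact cells_disjoint hc hc' hne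
      · have hd := hP.2.1 X hX X' hX' hXX
        exact hd.mono (cells_subset hc) (cells_subset hc')
    · rw [hQ, Finset.biUnion_biUnion]
      rw [show (P.biUnion fun X => (cellsOf X).biUnion id) = P.biUnion id from
        Finset.biUnion_congr rfl fun X _ => cells_biUnion _ _]
      exact hP.2.2
  have hcard : Q.card ≤ P.card * 4 ^ P.card := by
    calc Q.card ≤ ∑ X ∈ P, (cellsOf X).card := Finset.card_biUnion_le
    _ ≤ ∑ X ∈ P, 4 ^ P.card := by
        refine Finset.sum_le_sum fun X _ => ?_
        calc (cellsOf X).card ≤ 2 ^ (S X).card := cells_card _ _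
        _ ≤ 2 ^ (2 * P.card) := by
            apply Nat.pow_le_pow_right (by norm_num)
            calc (S X).card ≤ (P.image (fun Y => u X Y)).card
                + (P.image (fun Y => w Y X)).card := Finset.card_union_le _ _
            _ ≤ P.card + P.card := Nat.add_le_add (Finset.card_image_le) (Finset.card_image_le)
            _ = 2 * P.card := by ring
        _ = 4 ^ P.card := by rw [pow_mul]; norm_num
    _ = P.card * 4 ^ P.card := by rw [Finset.sum_const, smul_eq_mul]
  refine ⟨Q, hQpart, hcard, ?_⟩
  have henergyQ : energy G Q
      = ∑ X ∈ P, ∑ Y ∈ P, ∑ a ∈ cellsOf X, ∑ b ∈ cellsOf Y,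
          (edgeCount G a b)^2 / ((a.card : ℝ) * b.card) := by
    unfold energy
    rw [hQ, Finset.sum_biUnion hfam]
    refine Finset.sum_congr rfl fun X _ => ?_
    calc ∑ a ∈ cellsOf X, ∑ c' ∈ P.biUnion cellsOf,
          (edgeCount G a c')^2 / ((a.card : ℝ) * c'.card)
        = ∑ a ∈ cellsOf X, ∑ Y ∈ P, ∑ b ∈ cellsOf Y,
            (edgeCount G a b)^2 / ((a.card : ℝ) * b.card) :=
          Finset.sum_congr rfl fun a _ => Finset.sum_biUnion hfam
    _ = ∑ Y ∈ P, ∑ a ∈ cellsOf X, ∑ b ∈ cellsOf Y,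
          (edgeCount G a b)^2 / ((a.card : ℝ) * b.card) := Finset.sum_comm
  have hgain : ∀ X ∈ P, ∀ Y ∈ P,
      (edgeCount G X Y)^2 / ((X.card : ℝ) * Y.card)
        + (2 * irregPair G X Y)^2 / ((X.card : ℝ) * Y.card)
      ≤ ∑ a ∈ cellsOf X, ∑ b ∈ cellsOf Y, (edgeCount G a b)^2 / ((a.card : ℝ) * b.card) := by
    intro X hX Y hY
    have huS : u X Y ∈ S X := Finset.mem_union_left _ (Finset.mem_image_of_mem _ hY)
    have hwS : w X Y ∈ S Y :=
      Finset.mem_union_right _ (Finset.mem_image_of_mem (fun Z => w Z Y) hX)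
    have h := pair_gain G (hP.1 X hX) (hP.1 Y hY) (hparts X) (hparts Y)
      (hu X Y) (hw X Y)
      (fun a ha => cells_respect huS ha)
      (fun b hb => cells_respect hwS hb)
    rw [hval X Y] at h
    exact h
  have hstep1 : energy G P + ∑ X ∈ P, ∑ Y ∈ P,
      (2 * irregPair G X Y)^2 / ((X.card : ℝ) * Y.card) ≤ energy G Q := by
    rw [henergyQ]
    unfold energy
    rw [← Finset.sum_add_distrib]
    refine Finset.sum_le_sum fun X hX => ?_
    rw [← Finset.sum_add_distrib]
    exact Finset.sum_le_sum fun Y hY => hgain X hX Y hY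
  have hsum_s : ∑ p ∈ P ×ˢ P, ((p.1.card : ℝ) * p.2.card) = (Fintype.card V : ℝ)^2 := by
    have h1 : ∑ p ∈ P ×ˢ P, ((p.1.card : ℝ) * p.2.card)
        = (∑ X ∈ P, (X.card : ℝ)) * (∑ Y ∈ P, (Y.card : ℝ)) := by
      rw [Finset.sum_mul_sum, Finset.sum_product]
    rw [h1, hP.sum_card]
    ring
  have hcs : (irregPartition G P)^2 / (Fintype.card V : ℝ)^2
      ≤ ∑ X ∈ P, ∑ Y ∈ P, (irregPair G X Y)^2 / ((X.card : ℝ) * Y.card) := by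
    have h := cs_aux (P ×ˢ P) (fun p => irregPair G p.1 p.2)
      (fun p => (p.1.card : ℝ) * p.2.card)
      (fun p hp => irregPair_nonneg G p.1 p.2)
      (fun p hp => by
        rw [Finset.mem_product] at hp
        have := (hP.1 p.1 hp.1).card_pos
        have := (hP.1 p.2 hp.2).card_pos
        positivity)
    rw [hsum_s] at h
    have e1 : ∑ p ∈ P ×ˢ P, irregPair G p.1 p.2 = irregPartition G P := by
      rw [Finset.sum_product]
      rfl
    rw [e1] at h
    rw [Finset.sum_product] at h
    exact h
  have hirr2 : ε^2 * (Fintype.card V : ℝ)^2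
      < (irregPartition G P)^2 / (Fintype.card V : ℝ)^2 := by
    rw [lt_div_iff₀ hnR]
    have h0 : (0:ℝ) ≤ ε * (Fintype.card V : ℝ)^2 := by positivity
    nlinarith [hirr, h0]
  have hfour : ∑ X ∈ P, ∑ Y ∈ P, (2 * irregPair G X Y)^2 / ((X.card : ℝ) * Y.card)
      = 4 * ∑ X ∈ P, ∑ Y ∈ P, (irregPair G X Y)^2 / ((X.card : ℝ) * Y.card) := by
    rw [Finset.mul_sum]
    refine Finset.sum_congr rfl fun X _ => ?_
    rw [Finset.mul_sum]
    refine Finset.sum_congr rfl fun Y _ => ?_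
    ring
  have hlast : 4 * ε^2 * (Fintype.card V : ℝ)^2
      < ∑ X ∈ P, ∑ Y ∈ P, (2 * irregPair G X Y)^2 / ((X.card : ℝ) * Y.card) := by
    rw [hfour]
    linarith
  linarith

end Step

section Iterate
set_option linter.unusedSectionVars false
set_option linter.unusedVariables false
open scoped Classical
variable {V : Type*} [Fintype V] [DecidableEq V]

lemma energy_le_total (G : SimpleGraph V) {Q : Finset (Finset V)} (hQ : IsPartition Q) :
    energy G Q ≤ edgeCount G univ univ := by
  unfold energy
  calc ∑ X ∈ Q, ∑ Y ∈ Q, (edgeCount G X Y)^2 / ((X.card : ℝ) * Y.card)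
      ≤ ∑ X ∈ Q, ∑ Y ∈ Q, edgeCount G X Y := by
        refine Finset.sum_le_sum fun X hX => Finset.sum_le_sum fun Y hY => ?_
        have hs : (0:ℝ) < (X.card : ℝ) * Y.card := by
          have := (hQ.1 X hX).card_pos
          have := (hQ.1 Y hY).card_pos
          positivity
        rw [div_le_iff₀ hs]
        have h1 := edgeCount_nonneg G X Y
        have h2 := edgeCount_le G X Y
        nlinarith
  _ = edgeCount G univ univ := (edgeCount_double G hQ.partsOf hQ.partsOf).symm

lemma energy_singleton (G : SimpleGraph V) :
    energy G ({univ} : Finset (Finset V)) = (edgeCount G univ univ)^2 / (Fintype.card V : ℝ)^2 := by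
  unfold energy
  simp [sq]

lemma total_le (G : SimpleGraph V) (hn : 0 < Fintype.card V) :
    edgeCount G univ univ
      ≤ (edgeCount G univ univ)^2 / (Fintype.card V : ℝ)^2 + (Fintype.card V : ℝ)^2 / 4 := by
  set e := edgeCount G univ univ with he
  have hnR : (0:ℝ) < ((Fintype.card V : ℝ))^2 := by
    have h : (0:ℝ) < (Fintype.card V : ℝ) := by exact_mod_cast hn
    positivity
  rw [← sub_nonneg]
  have h2 : e^2 / (Fintype.card V : ℝ)^2 * (Fintype.card V : ℝ)^2 = e^2 :=
    div_mul_cancel₀ _ hnR.ne'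
  nlinarith [sq_nonneg (e - (Fintype.card V : ℝ)^2 / 2), hnR, h2]

lemma iterate_lemma (G : SimpleGraph V) {ε : ℝ} (hε : 0 < ε) :
    ∀ (k b : ℕ) (P : Finset (Finset V)), IsPartition P → 4 * P.card ≤ tower (b+2) →
    ∃ Q j, IsPartition Q ∧ j ≤ k ∧ 4 * Q.card ≤ tower (b + j + 2) ∧
      energy G P + j * (4 * ε^2 * (Fintype.card V : ℝ)^2) ≤ energy G Q ∧
      (irregPartition G Q ≤ ε * (Fintype.card V : ℝ)^2 ∨ j = k) := by
  intro k
  induction k with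
  | zero =>
      intro b P hP hc
      exact ⟨P, 0, hP, le_refl 0, by simpa using hc, by simp, Or.inr rfl⟩
  | succ k ih =>
      intro b P hP hc
      by_cases hstop : irregPartition G P ≤ ε * (Fintype.card V : ℝ)^2
      · exact ⟨P, 0, hP, Nat.zero_le _, by simpa using hc, by simp, Or.inl hstop⟩
      · push_neg at hstop
        obtain ⟨P', hP', hcard', hen'⟩ := step_lemma G hP hε hstop
        have hc' : 4 * P'.card ≤ tower (b + 1 + 2) := by
          calc 4 * P'.card ≤ 4 * (P.card * 4 ^ P.card) := by
                exact Nat.mul_le_mul_left 4 hcard'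
          _ ≤ 2 ^ tower (b + 2) := card_step hc
          _ = tower (b + 3) := (tower_succ _).symm
          _ = tower (b + 1 + 2) := by norm_num
        obtain ⟨Q, j, hQ, hj, hcQ, henQ, hlast⟩ := ih (b+1) P' hP' hc'
        refine ⟨Q, j+1, hQ, by omega, ?_, ?_, ?_⟩
        · have heq : b + 1 + j + 2 = b + (j+1) + 2 := by omega
          rw [← heq]
          exact hcQ
        · have h1 : energy G P + (↑(j+1) : ℝ) * (4 * ε^2 * (Fintype.card V : ℝ)^2)
              = (energy G P + 4 * ε^2 * (Fintype.card V : ℝ)^2)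
                + (j : ℝ) * (4 * ε^2 * (Fintype.card V : ℝ)^2) := by
            push_cast
            ring
          rw [h1]
          linarith
        · rcases hlast with h | h
          · exact Or.inl h
          · exact Or.inr (by omega)

end Iterate

/-- Szemerédi's regularity lemma: every graph has a vertex partition into at most
`tower (⌊ε⁻²/16⌋ + 2)` nonempty parts with irregularity at most `ε |V|²`. -/
theorem regularity_upper_bound (ε : ℝ) (hε : 0 < ε) {V : Type*} [Fintype V] [DecidableEq V]
    (G : SimpleGraph V) :
    ∃ P : Finset (Finset V), IsPartition P ∧ P.card ≤ tower (⌊ε⁻¹ ^ 2 / 16⌋₊ + 2) ∧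
      irregPartition G P ≤ ε * (Fintype.card V : ℝ) ^ 2 := by
  classical
  rcases Nat.eq_zero_or_pos (Fintype.card V) with hn | hn
  · -- empty vertex type
    have huniv : (univ : Finset V) = ∅ := by
      rw [← Finset.card_eq_zero, Finset.card_univ, hn]
    refine ⟨∅, ⟨by simp, by simp, by simp [huniv]⟩, by simp, ?_⟩
    simp [irregPartition, hn]
  · have hnR : (0:ℝ) < (Fintype.card V : ℝ)^2 := by
      have : (0:ℝ) < (Fintype.card V : ℝ) := by exact_mod_cast hn
      positivity
    have hP0 : IsPartition ({univ} : Finset (Finset V)) := by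
      refine ⟨?_, ?_, by simp⟩
      · intro p hp
        rw [Finset.mem_singleton] at hp
        subst hp
        rw [← Finset.card_pos, Finset.card_univ]
        exact hn
      · intro p hp q hq hpq
        rw [Finset.mem_singleton] at hp hq
        exact absurd (hp.trans hq.symm) hpq
    set K := ⌊ε⁻¹ ^ 2 / 16⌋₊ with hK
    obtain ⟨Q, j, hQ, hj, hcQ, henQ, hlast⟩ :=
      iterate_lemma G hε (K + 1) 0 {univ} hP0 (by simp [tower])
    -- bound on j from the energy
    have hEQ : energy G Q ≤ energy G ({univ} : Finset (Finset V)) + (Fintype.card V : ℝ)^2 / 4 := by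
      rw [energy_singleton]
      calc energy G Q ≤ edgeCount G univ univ := energy_le_total G hQ
      _ ≤ _ := total_le G hn
    have hjb : (j : ℝ) * (4 * ε^2 * (Fintype.card V : ℝ)^2) ≤ (Fintype.card V : ℝ)^2 / 4 := by
      linarith
    have hjK : j ≤ K := by
      rw [hK]
      apply Nat.le_floor
      have h1 : (j : ℝ) * (4 * ε^2) ≤ 1/4 := by
        have h2 : (j : ℝ) * (4 * ε^2) * (Fintype.card V : ℝ)^2 ≤ ((Fintype.card V : ℝ)^2 / 4) := by
          calc (j : ℝ) * (4 * ε^2) * (Fintype.card V : ℝ)^2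
              = (j : ℝ) * (4 * ε^2 * (Fintype.card V : ℝ)^2) := by ring
          _ ≤ (Fintype.card V : ℝ)^2 / 4 := hjb
        nlinarith
      rw [show ε⁻¹ ^ 2 / 16 = 1 / (16 * ε^2) by field_simp]
      rw [le_div_iff₀ (by positivity)]
      nlinarith
    have hirrQ : irregPartition G Q ≤ ε * (Fintype.card V : ℝ)^2 := by
      rcases hlast with h | h
      · exact h
      · omega
    refine ⟨Q, hQ, ?_, hirrQ⟩
    calc Q.card ≤ 4 * Q.card := by omega
    _ ≤ tower (0 + j + 2) := hcQ
    _ ≤ tower (K + 2) := tower_mono (by omega)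
end

section
/- Let T be a real-valued random variable on a probability space with E(T) = 0 and with finite second moment, and suppose a ≠ 0 is a real number such that P(T = a) = p with 0 < p < 1. Then E(T²) ≥ (p/(1−p))·a². -/
open MeasureTheory

/-- If `T` is a square-integrable random variable with mean `0` that takes the value
`a ≠ 0` with probability `p`, `0 < p < 1`, then `E(T²) ≥ (p/(1-p))·a²`. -/
theorem second_moment_lower_bound {Ω : Type*} [MeasurableSpace Ω] (μ : Measure Ω)
    [IsProbabilityMeasure μ] (T : Ω → ℝ) (hInt : Integrable T μ) (hL2 : MemLp T 2 μ)
    (hmean : ∫ ω, T ω ∂μ = 0) (a p : ℝ) (ha : a ≠ 0) (hp0 : 0 < p) (hp1 : p < 1)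
    (hPa : μ {ω | T ω = a} = ENNReal.ofReal p) :
    p / (1 - p) * a ^ 2 ≤ ∫ ω, T ω ^ 2 ∂μ := by
  classical
  set g : Ω → ℝ := hL2.1.mk T with hgdef
  have hTg : T =ᵐ[μ] g := hL2.1.ae_eq_mk
  have hgm : Measurable g := hL2.1.stronglyMeasurable_mk.measurable
  have hgInt : Integrable g μ := hInt.congr hTg
  have hgL2 : MemLp g 2 μ := hL2.ae_eq hTg
  set A : Set Ω := {ω | g ω = a} with hAdef
  have hA : MeasurableSet A := hgm (measurableSet_singleton a)
  have hμA : μ A = ENNReal.ofReal p := by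
    rw [← hPa]
    refine measure_congr ?_ |>.symm
    filter_upwards [hTg] with ω h
    show (T ω = a) = (g ω = a)
    rw [h]
  have hμAc : μ Aᶜ = ENNReal.ofReal (1 - p) := by
    rw [measure_compl hA (measure_ne_top μ A), hμA, measure_univ,
      ← ENNReal.ofReal_one, ← ENNReal.ofReal_sub _ hp0.le]
  have hμAtr : (μ A).toReal = p := by rw [hμA, ENNReal.toReal_ofReal hp0.le]
  have hμActr : (μ Aᶜ).toReal = 1 - p := by
    rw [hμAc, ENNReal.toReal_ofReal (by linarith)]
  -- integrals over A
  have hintA : ∫ ω in A, g ω ∂μ = a * p := by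
    rw [setIntegral_congr_fun hA (fun ω hω => hω), setIntegral_const, measureReal_def, hμAtr, smul_eq_mul,
      mul_comm]
  have hintA2 : ∫ ω in A, g ω ^ 2 ∂μ = a ^ 2 * p := by
    have : ∫ ω in A, g ω ^ 2 ∂μ = ∫ _ω in A, a ^ 2 ∂μ :=
      setIntegral_congr_fun hA (fun ω hω => by rw [show g ω = a from hω])
    rw [this, setIntegral_const, measureReal_def, hμAtr, smul_eq_mul, mul_comm]
  have hgsq_int : Integrable (fun ω => g ω ^ 2) μ := by
    have := hgL2.integrable_sq
    simpa [sq] using this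
  have hgmean : ∫ ω, g ω ∂μ = 0 := by
    rw [← integral_congr_ae hTg, hmean]
  have hsplit : ∫ ω in A, g ω ∂μ + ∫ ω in Aᶜ, g ω ∂μ = ∫ ω, g ω ∂μ :=
    integral_add_compl hA hgInt
  have hintAc : ∫ ω in Aᶜ, g ω ∂μ = -(a * p) := by
    rw [hgmean, hintA] at hsplit; linarith
  -- Cauchy–Schwarz on Aᶜ
  set I : ℝ := ∫ ω in Aᶜ, g ω ^ 2 ∂μ with hIdef
  have hInonneg : 0 ≤ I := integral_nonneg fun ω => sq_nonneg _
  have hpq : Real.HolderConjugate 2 2 := Real.HolderConjugate.two_two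
  have hmem1 : MemLp g (ENNReal.ofReal 2) (μ.restrict Aᶜ) := by
    have : (ENNReal.ofReal 2) = 2 := by norm_num
    rw [this]; exact hgL2.restrict _
  have hmem2 : MemLp (fun _ : Ω => (1 : ℝ)) (ENNReal.ofReal 2) (μ.restrict Aᶜ) :=
    memLp_const _
  have hCS := integral_mul_norm_le_Lp_mul_Lq (μ := μ.restrict Aᶜ) hpq hmem1 hmem2
  have hnorm1 : ∫ ω in Aᶜ, ‖g ω‖ * ‖(1 : ℝ)‖ ∂μ = ∫ ω in Aᶜ, ‖g ω‖ ∂μ := by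
    simp
  have hpow : ∀ x : ℝ, ‖x‖ ^ (2 : ℝ) = x ^ 2 := by
    intro x
    rw [show (2:ℝ) = ((2:ℕ):ℝ) by norm_num, Real.rpow_natCast]
    simp [sq_abs]
  have hRHS1 : ∫ ω in Aᶜ, ‖g ω‖ ^ (2 : ℝ) ∂μ = I := by
    simp only [hpow, hIdef]
  have hRHS2 : ∫ (_ω : Ω) in Aᶜ, ‖(1 : ℝ)‖ ^ (2 : ℝ) ∂μ = 1 - p := by
    simp [hμActr, measureReal_def]
  rw [hnorm1, hRHS1, hRHS2] at hCS
  have habs : |a| * p ≤ I ^ ((1:ℝ)/2) * (1 - p) ^ ((1:ℝ)/2) := by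
    have h1 : |∫ ω in Aᶜ, g ω ∂μ| ≤ ∫ ω in Aᶜ, ‖g ω‖ ∂μ := by
      simpa using norm_integral_le_integral_norm (μ := μ.restrict Aᶜ) g
    rw [hintAc, abs_neg, abs_mul, abs_of_pos hp0] at h1
    exact h1.trans hCS
  have hsq : a ^ 2 * p ^ 2 ≤ I * (1 - p) := by
    have h2 : (|a| * p) ^ 2 ≤ (I ^ ((1:ℝ)/2) * (1 - p) ^ ((1:ℝ)/2)) ^ 2 := by
      apply pow_le_pow_left₀ (by positivity) habs
    have e1 : (I ^ ((1:ℝ)/2)) ^ 2 = I := by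
      rw [← Real.rpow_natCast (I ^ ((1:ℝ)/2)) 2, ← Real.rpow_mul hInonneg]
      norm_num
    have e2 : ((1 - p) ^ ((1:ℝ)/2)) ^ 2 = 1 - p := by
      rw [← Real.rpow_natCast ((1-p) ^ ((1:ℝ)/2)) 2, ← Real.rpow_mul (by linarith)]
      norm_num
    calc a ^ 2 * p ^ 2 = (|a| * p) ^ 2 := by rw [mul_pow, sq_abs]
      _ ≤ (I ^ ((1:ℝ)/2) * (1 - p) ^ ((1:ℝ)/2)) ^ 2 := h2
      _ = I * (1 - p) := by rw [mul_pow, e1, e2]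
  have htotal : ∫ ω, T ω ^ 2 ∂μ = a ^ 2 * p + I := by
    have hcong : ∫ ω, T ω ^ 2 ∂μ = ∫ ω, g ω ^ 2 ∂μ :=
      integral_congr_ae (hTg.mono fun ω h => by simp only [h])
    rw [hcong, ← integral_add_compl hA hgsq_int, hintA2]
  rw [htotal, div_mul_eq_mul_div, div_le_iff₀ (by linarith)]
  nlinarith [hsq]
end

section
/- Let V be a finite set of N vertices and let w : V × V → [0,1] be a symmetric weight function (a weighted graph on N vertices with weights in [0,1]). Then there exists a symmetric function g : V × V → {0,1} (an unweighted graph on the same vertices) such that for every pair of subsets A, B ⊆ V, |Σ_{(x,y) ∈ A×B} g(x,y) − Σ_{(x,y) ∈ A×B} w(x,y)| ≤ 4N^{3/2}. -/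
open Finset

/-- The sum of weights over ordered pairs in `A × B` in a weighted graph `w`. -/
def weightSum {V : Type*} (w : V → V → ℝ) (A B : Finset V) : ℝ :=
  ∑ x ∈ A, ∑ y ∈ B, w x y

/-- The weighted edge density between `X` and `Y`. -/
noncomputable def wDensity {V : Type*} (w : V → V → ℝ) (X Y : Finset V) : ℝ :=
  weightSum w X Y / ((X.card : ℝ) * (Y.card : ℝ))

/-- The irregularity of the pair `X, Y` in a weighted graph `w`. -/
noncomputable def wIrregPair {V : Type*} [DecidableEq V] (w : V → V → ℝ)
    (X Y : Finset V) : ℝ :=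
  (X.powerset ×ˢ Y.powerset).sup'
    ⟨(∅, ∅), by simp⟩
    (fun UW => |weightSum w UW.1 UW.2 - (UW.1.card : ℝ) * (UW.2.card : ℝ) * wDensity w X Y|)

/-- The irregularity of a vertex partition in a weighted graph `w`. -/
noncomputable def wIrregPartition {V : Type*} [DecidableEq V] (w : V → V → ℝ)
    (P : Finset (Finset V)) : ℝ :=
  ∑ X ∈ P, ∑ Y ∈ P, wIrregPair w X Y

namespace UAppx

open Real

private lemma aux_convex (u y : ℝ) (h1 : -1 ≤ y) (h2 : y ≤ 1) :
    exp (u * y) ≤ (1 + y) / 2 * exp u + (1 - y) / 2 * exp (-u) := by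
  have h := convexOn_exp.2 (Set.mem_univ u) (Set.mem_univ (-u))
    (by linarith : (0:ℝ) ≤ (1 + y) / 2) (by linarith : (0:ℝ) ≤ (1 - y) / 2) (by ring)
  simp only [smul_eq_mul] at h
  have harg : (1 + y) / 2 * u + (1 - y) / 2 * -u = u * y := by ring
  rwa [harg] at h

private lemma hoeffding_point (a u : ℝ) (ha0 : 0 ≤ a) (ha1 : a ≤ 1) :
    a * exp (u * (1 - a)) + (1 - a) * exp (u * (0 - a)) ≤ exp (u ^ 2 / 2) := by
  have e1 := mul_le_mul_of_nonneg_left (aux_convex u (1 - a) (by linarith) (by linarith)) ha0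
  have e2 := mul_le_mul_of_nonneg_left (aux_convex u (0 - a) (by linarith) (by linarith))
    (by linarith : (0:ℝ) ≤ 1 - a)
  calc a * exp (u * (1 - a)) + (1 - a) * exp (u * (0 - a))
      ≤ a * ((1 + (1 - a)) / 2 * exp u + (1 - (1 - a)) / 2 * exp (-u))
        + (1 - a) * ((1 + (0 - a)) / 2 * exp u + (1 - (0 - a)) / 2 * exp (-u)) :=
        add_le_add e1 e2
    _ = (exp u + exp (-u)) / 2 := by ring
    _ = cosh u := (Real.cosh_eq u).symm
    _ ≤ exp (u ^ 2 / 2) := Real.cosh_le_exp_half_sq u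

private lemma numeric_bound (n : ℕ) (hn : 2 ≤ n) :
    (4 : ℝ) ^ n * 2 * Real.exp (-(2 * n)) < 1 := by
  have he : (7.3 : ℝ) < Real.exp 2 := by
    have h1 : (2.7182818283 : ℝ) < Real.exp 1 := Real.exp_one_gt_d9
    have h2 : Real.exp 2 = Real.exp 1 * Real.exp 1 := by
      rw [← Real.exp_add]; norm_num
    nlinarith
  have key : ∀ m : ℕ, 2 ≤ m → (4 : ℝ) ^ m * 2 < 7.3 ^ m := by
    intro m hm
    induction m, hm using Nat.le_induction with
    | base => norm_num
    | succ m hm ih =>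
      have h73 : (0:ℝ) < 7.3 ^ m := by positivity
      calc (4:ℝ) ^ (m+1) * 2 = 4 * ((4:ℝ) ^ m * 2) := by ring
        _ < 4 * 7.3 ^ m := by nlinarith
        _ ≤ 7.3 * 7.3 ^ m := by nlinarith
        _ = 7.3 ^ (m+1) := by ring
  have hexp : (7.3 : ℝ) ^ n ≤ Real.exp (2 * n) := by
    have : Real.exp (2 * (n:ℝ)) = Real.exp 2 ^ n := by
      rw [mul_comm]
      exact_mod_cast Real.exp_nat_mul 2 n
    rw [this]
    exact pow_le_pow_left₀ (by norm_num) he.le n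
  have hlt : (4 : ℝ) ^ n * 2 < Real.exp (2 * n) := lt_of_lt_of_le (key n hn) hexp
  have hpos : (0:ℝ) < Real.exp (2 * n) := Real.exp_pos _
  rw [Real.exp_neg]
  rw [mul_inv_lt_iff₀ hpos, one_mul]
  exact hlt

end UAppx

namespace UAppx
open Real

variable {V : Type*} [Fintype V] [DecidableEq V]

/-- fiber count of a pair over `A ×ˢ B`. -/
private def cnt (A B : Finset V) (p : Sym2 V) : ℕ :=
  ((A ×ˢ B).filter fun z => Sym2.mk.uncurry z = p).card

private noncomputable def q (ω : Sym2 V → ℝ) (p : Sym2 V) (b : Bool) : ℝ :=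
  if b then ω p else 1 - ω p

private noncomputable def mu (ω : Sym2 V → ℝ) (f : Sym2 V → Bool) : ℝ :=
  ∏ p, q ω p (f p)

private noncomputable def D (ω : Sym2 V → ℝ) (f : Sym2 V → Bool) (A B : Finset V) : ℝ :=
  ∑ p, (cnt A B p : ℝ) * ((if f p then (1:ℝ) else 0) - ω p)

private lemma cnt_le_two (A B : Finset V) (p : Sym2 V) : cnt A B p ≤ 2 := by
  induction p using Sym2.ind with
  | _ u v =>
    have hsub : ((A ×ˢ B).filter fun z => Sym2.mk.uncurry z = s(u, v)) ⊆ {(u, v), (v, u)} := by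
      intro z hz
      rcases (Sym2.mk_eq_mk_iff (p := z) (q := (u, v))).mp (Finset.mem_filter.mp hz).2 with h | h
      · simp [h]
      · simp [h, Prod.swap]
    calc cnt A B s(u, v) ≤ ({(u, v), (v, u)} : Finset (V × V)).card :=
          Finset.card_le_card hsub
      _ ≤ 2 := Finset.card_insert_le _ _ |>.trans (by simp)

private lemma dev_eq (ω : Sym2 V → ℝ) (f : Sym2 V → Bool) (A B : Finset V) :
    ∑ x ∈ A, ∑ y ∈ B, ((if f s(x, y) then (1:ℝ) else 0) - ω s(x, y)) = D ω f A B := by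
  have h1 : ∑ x ∈ A, ∑ y ∈ B, ((if f s(x, y) then (1:ℝ) else 0) - ω s(x, y))
      = ∑ z ∈ A ×ˢ B, ((if f (Sym2.mk.uncurry z) then (1:ℝ) else 0) - ω (Sym2.mk.uncurry z)) := by
    rw [Finset.sum_product]; rfl
  rw [h1, ← Finset.sum_fiberwise' (A ×ˢ B) Sym2.mk.uncurry
    (fun p => (if f p then (1:ℝ) else 0) - ω p)]
  unfold D cnt
  refine Finset.sum_congr rfl fun p _ => ?_
  rw [Finset.sum_const, nsmul_eq_mul]

private lemma mu_nonneg (ω : Sym2 V → ℝ) (hω0 : ∀ p, 0 ≤ ω p) (hω1 : ∀ p, ω p ≤ 1)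
    (f : Sym2 V → Bool) : 0 ≤ mu ω f := by
  refine Finset.prod_nonneg fun p _ => ?_
  unfold q
  cases f p <;> simp <;> [linarith [hω1 p]; exact hω0 p]

private lemma mu_sum (ω : Sym2 V → ℝ) : ∑ f : Sym2 V → Bool, mu ω f = 1 := by
  unfold mu
  rw [← Fintype.prod_sum (fun p b => q ω p b)]
  have h : ∀ p : Sym2 V, q ω p true + q ω p false = 1 := by
    intro p; unfold q; simp
  simp [Fintype.sum_bool, h]

end UAppx

namespace UAppx
open Real

variable {V : Type*} [Fintype V] [DecidableEq V]

private lemma mgf_bound (ω : Sym2 V → ℝ) (hω0 : ∀ p, 0 ≤ ω p) (hω1 : ∀ p, ω p ≤ 1)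
    (A B : Finset V) (t : ℝ) :
    ∑ f : Sym2 V → Bool, mu ω f * Real.exp (t * D ω f A B) ≤
      Real.exp (2 * t ^ 2 * (Fintype.card V : ℝ) ^ 2) := by
  set F : (p : Sym2 V) → Bool → ℝ := fun p b =>
    q ω p b * Real.exp (t * ((cnt A B p : ℝ) * ((if b then (1:ℝ) else 0) - ω p))) with hF
  have hrw : ∀ f : Sym2 V → Bool,
      mu ω f * Real.exp (t * D ω f A B) = ∏ p, F p (f p) := by
    intro f
    unfold D mu
    rw [Finset.mul_sum, Real.exp_sum, ← Finset.prod_mul_distrib]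
  have hswap : ∑ f : Sym2 V → Bool, ∏ p, F p (f p) = ∏ p, ∑ b, F p b :=
    (Fintype.prod_sum F).symm
  have hfac : ∀ p : Sym2 V, ∑ b, F p b ≤ Real.exp (2 * t ^ 2) := by
    intro p
    have hc0 : (0:ℝ) ≤ (cnt A B p : ℝ) := Nat.cast_nonneg _
    have hc2 : ((cnt A B p : ℝ)) ≤ 2 := by exact_mod_cast cnt_le_two A B p
    have key := hoeffding_point (ω p) (t * (cnt A B p : ℝ)) (hω0 p) (hω1 p)
    rw [mul_assoc, mul_assoc] at key
    have hsum : ∑ b, F p b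
        = ω p * Real.exp (t * ((cnt A B p : ℝ) * (1 - ω p)))
          + (1 - ω p) * Real.exp (t * ((cnt A B p : ℝ) * (0 - ω p))) := by
      rw [Fintype.sum_bool, hF]
      unfold q
      norm_num
    rw [hsum]
    refine key.trans (Real.exp_le_exp.mpr ?_)
    have hcsq : ((cnt A B p : ℝ)) ^ 2 ≤ 4 := by nlinarith
    have := mul_le_mul_of_nonneg_left hcsq (sq_nonneg t)
    nlinarith [this]
  have hfac_nonneg : ∀ p : Sym2 V, (0:ℝ) ≤ ∑ b, F p b := by
    intro p
    refine Finset.sum_nonneg fun b _ => mul_nonneg ?_ (Real.exp_nonneg _)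
    unfold q; cases b <;> simp <;> [linarith [hω1 p]; exact hω0 p]
  have hM : (Fintype.card (Sym2 V) : ℝ) ≤ (Fintype.card V : ℝ) ^ 2 := by
    have hs : Function.Surjective (Sym2.mk.uncurry : V × V → Sym2 V) := fun p =>
      Sym2.ind (fun u v => ⟨(u, v), rfl⟩) p
    have := Fintype.card_le_of_surjective _ hs
    rw [Fintype.card_prod] at this
    calc (Fintype.card (Sym2 V) : ℝ) ≤ (Fintype.card V * Fintype.card V : ℕ) := by
          exact_mod_cast this
      _ = (Fintype.card V : ℝ) ^ 2 := by push_cast; ring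
  calc ∑ f : Sym2 V → Bool, mu ω f * Real.exp (t * D ω f A B)
      = ∏ p, ∑ b, F p b := by rw [← hswap]; exact Finset.sum_congr rfl fun f _ => hrw f
    _ ≤ ∏ _p : Sym2 V, Real.exp (2 * t ^ 2) :=
        Finset.prod_le_prod (fun p _ => hfac_nonneg p) (fun p _ => hfac p)
    _ = Real.exp ((Fintype.card (Sym2 V) : ℝ) * (2 * t ^ 2)) := by
        rw [Finset.prod_const, Finset.card_univ, ← Real.exp_nat_mul]
    _ ≤ Real.exp (2 * t ^ 2 * (Fintype.card V : ℝ) ^ 2) := by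
        rw [Real.exp_le_exp]
        have h2t : (0:ℝ) ≤ 2 * t ^ 2 := by positivity
        nlinarith [mul_le_mul_of_nonneg_left hM h2t]

end UAppx

namespace UAppx
open Real

variable {V : Type*} [Fintype V] [DecidableEq V]

private lemma core (ω : Sym2 V → ℝ) (hω0 : ∀ p, 0 ≤ ω p) (hω1 : ∀ p, ω p ≤ 1)
    (hn : 2 ≤ Fintype.card V) :
    ∃ f : Sym2 V → Bool, ∀ A B : Finset V,
      |D ω f A B| ≤ 4 * (Fintype.card V : ℝ) ^ ((3 : ℝ) / 2) := by
  classical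
  set n := Fintype.card V with hn_def
  have hn0 : (0:ℝ) < n := by exact_mod_cast (by omega : 0 < n)
  set t : ℝ := 1 / Real.sqrt n with ht_def
  set lam : ℝ := 4 * (n : ℝ) ^ ((3:ℝ)/2) with hlam_def
  have hsq : (0:ℝ) < Real.sqrt n := Real.sqrt_pos.mpr hn0
  have ht0 : 0 < t := by positivity
  have htlam : t * lam = 4 * n := by
    have h32 : (n:ℝ) ^ ((3:ℝ)/2) = n * Real.sqrt n := by
      rw [show ((3:ℝ)/2) = 1 + 1/2 by norm_num, Real.rpow_add hn0, Real.rpow_one,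
        ← Real.sqrt_eq_rpow]
    rw [ht_def, hlam_def, h32]
    field_simp
  have ht2 : t ^ 2 = 1 / n := by
    rw [ht_def, div_pow, one_pow, Real.sq_sqrt hn0.le]
  have hmgfval : 2 * t ^ 2 * (n : ℝ) ^ 2 = 2 * n := by
    rw [ht2]; field_simp
  -- per-pair bound
  have per : ∀ A B : Finset V,
      ∑ f : Sym2 V → Bool, (if lam < |D ω f A B| then mu ω f else 0) ≤
        2 * Real.exp (-(2 * n)) := by
    intro A B
    have mgfp := mgf_bound ω hω0 hω1 A B t
    have mgfm := mgf_bound ω hω0 hω1 A B (-t)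
    rw [hmgfval] at mgfp
    have hmgfval' : 2 * (-t) ^ 2 * (n : ℝ) ^ 2 = 2 * n := by rw [neg_pow]; simpa using hmgfval
    rw [hmgfval'] at mgfm
    have ptwise : ∀ f : Sym2 V → Bool,
        (if lam < |D ω f A B| then mu ω f else 0) ≤
          mu ω f * Real.exp (t * D ω f A B) * Real.exp (-(t * lam))
            + mu ω f * Real.exp (-t * D ω f A B) * Real.exp (-(t * lam)) := by
      intro f
      have hmu := mu_nonneg ω hω0 hω1 f
      have hterm1 : 0 ≤ mu ω f * Real.exp (t * D ω f A B) * Real.exp (-(t * lam)) :=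
        mul_nonneg (mul_nonneg hmu (Real.exp_nonneg _)) (Real.exp_nonneg _)
      have hterm2 : 0 ≤ mu ω f * Real.exp (-t * D ω f A B) * Real.exp (-(t * lam)) :=
        mul_nonneg (mul_nonneg hmu (Real.exp_nonneg _)) (Real.exp_nonneg _)
      by_cases h : lam < |D ω f A B|
      · rw [if_pos h]
        rcases lt_abs.mp h with hgt | hlt
        · have h1 : (1:ℝ) ≤ Real.exp (t * D ω f A B) * Real.exp (-(t * lam)) := by
            rw [← Real.exp_add]
            refine Real.one_le_exp ?_
            nlinarith
          calc mu ω f = mu ω f * 1 := (mul_one _).symm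
            _ ≤ mu ω f * (Real.exp (t * D ω f A B) * Real.exp (-(t * lam))) :=
                mul_le_mul_of_nonneg_left h1 hmu
            _ = mu ω f * Real.exp (t * D ω f A B) * Real.exp (-(t * lam)) := by ring
            _ ≤ _ := le_add_of_nonneg_right hterm2
        · have h1 : (1:ℝ) ≤ Real.exp (-t * D ω f A B) * Real.exp (-(t * lam)) := by
            rw [← Real.exp_add]
            refine Real.one_le_exp ?_
            nlinarith
          calc mu ω f = mu ω f * 1 := (mul_one _).symm
            _ ≤ mu ω f * (Real.exp (-t * D ω f A B) * Real.exp (-(t * lam))) :=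
                mul_le_mul_of_nonneg_left h1 hmu
            _ = mu ω f * Real.exp (-t * D ω f A B) * Real.exp (-(t * lam)) := by ring
            _ ≤ _ := le_add_of_nonneg_left hterm1
      · rw [if_neg h]
        exact add_nonneg hterm1 hterm2
    calc ∑ f : Sym2 V → Bool, (if lam < |D ω f A B| then mu ω f else 0)
        ≤ ∑ f : Sym2 V → Bool,
            (mu ω f * Real.exp (t * D ω f A B) * Real.exp (-(t * lam))
              + mu ω f * Real.exp (-t * D ω f A B) * Real.exp (-(t * lam))) :=
          Finset.sum_le_sum fun f _ => ptwise f
      _ = (∑ f : Sym2 V → Bool, mu ω f * Real.exp (t * D ω f A B)) * Real.exp (-(t * lam))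
            + (∑ f : Sym2 V → Bool, mu ω f * Real.exp (-t * D ω f A B)) * Real.exp (-(t * lam)) := by
          rw [Finset.sum_add_distrib, ← Finset.sum_mul, ← Finset.sum_mul]
      _ ≤ Real.exp (2 * n) * Real.exp (-(t * lam)) + Real.exp (2 * n) * Real.exp (-(t * lam)) :=
          add_le_add (mul_le_mul_of_nonneg_right mgfp (Real.exp_nonneg _))
            (mul_le_mul_of_nonneg_right mgfm (Real.exp_nonneg _))
      _ = 2 * Real.exp (-(2 * n)) := by
          rw [htlam, ← Real.exp_add]
          have harg : 2 * (n:ℝ) + -(4 * n) = -(2 * n) := by ring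
          rw [harg]
          ring
  -- global union bound
  by_contra hcon
  push_neg at hcon
  have h2 : (1:ℝ) ≤ ∑ AB : Finset V × Finset V,
      ∑ f : Sym2 V → Bool, (if lam < |D ω f AB.1 AB.2| then mu ω f else 0) := by
    rw [← Finset.sum_comm]
    calc (1:ℝ) = ∑ f : Sym2 V → Bool, mu ω f := (mu_sum ω).symm
      _ ≤ ∑ f : Sym2 V → Bool,
            ∑ AB : Finset V × Finset V, (if lam < |D ω f AB.1 AB.2| then mu ω f else 0) := by
          refine Finset.sum_le_sum fun f _ => ?_
          obtain ⟨A, B, hAB⟩ := hcon f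
          have hnn : ∀ AB : Finset V × Finset V, AB ∈ Finset.univ →
              (0:ℝ) ≤ if lam < |D ω f AB.1 AB.2| then mu ω f else 0 := by
            intro AB _
            by_cases h : lam < |D ω f AB.1 AB.2|
            · rw [if_pos h]; exact mu_nonneg ω hω0 hω1 f
            · rw [if_neg h]
          have := Finset.single_le_sum
            (f := fun AB : Finset V × Finset V =>
              if lam < |D ω f AB.1 AB.2| then mu ω f else 0) hnn (Finset.mem_univ (A, B))
          simpa [hAB] using this
  have h3 : ∑ AB : Finset V × Finset V,
      ∑ f : Sym2 V → Bool, (if lam < |D ω f AB.1 AB.2| then mu ω f else 0) ≤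
        (4:ℝ) ^ n * 2 * Real.exp (-(2 * n)) := by
    calc ∑ AB : Finset V × Finset V,
        ∑ f : Sym2 V → Bool, (if lam < |D ω f AB.1 AB.2| then mu ω f else 0)
        ≤ ∑ _AB : Finset V × Finset V, 2 * Real.exp (-(2 * n)) :=
          Finset.sum_le_sum fun AB _ => per AB.1 AB.2
      _ = (Fintype.card (Finset V × Finset V) : ℝ) * (2 * Real.exp (-(2 * n))) := by
          rw [Finset.sum_const, Finset.card_univ, nsmul_eq_mul]
      _ = (4:ℝ) ^ n * 2 * Real.exp (-(2 * n)) := by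
          rw [Fintype.card_prod, Fintype.card_finset]
          push_cast
          rw [← hn_def]
          ring_nf
          rw [show (4:ℝ) = 2 * 2 by norm_num, mul_pow]
          ring
  have := numeric_bound n hn
  linarith
end UAppx

/-- Every weighted graph with weights in `[0,1]` on `N` vertices can be approximated by an
unweighted graph so that all pairwise edge counts differ by at most `4 N^(3/2)`. -/
theorem exists_unweighted_approximation {V : Type*} [Fintype V] [DecidableEq V]
    (w : V → V → ℝ) (hsymm : ∀ x y, w x y = w y x) (h0 : ∀ x y, 0 ≤ w x y)
    (h1 : ∀ x y, w x y ≤ 1) :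
    ∃ g : V → V → ℝ, (∀ x y, g x y = g y x) ∧ (∀ x y, g x y = 0 ∨ g x y = 1) ∧
      ∀ A B : Finset V,
        |weightSum g A B - weightSum w A B| ≤ 4 * (Fintype.card V : ℝ) ^ ((3 : ℝ) / 2) := by
  classical
  by_cases hn : 2 ≤ Fintype.card V
  · set ω : Sym2 V → ℝ := Sym2.lift ⟨w, hsymm⟩ with hω_def
    have hωmk : ∀ x y, ω s(x, y) = w x y := fun x y => Sym2.lift_mk ⟨w, hsymm⟩ x y
    have hω0 : ∀ p, 0 ≤ ω p := fun p =>
      Sym2.ind (fun x y => by rw [hωmk]; exact h0 x y) p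
    have hω1 : ∀ p, ω p ≤ 1 := fun p =>
      Sym2.ind (fun x y => by rw [hωmk]; exact h1 x y) p
    obtain ⟨f, hf⟩ := UAppx.core ω hω0 hω1 hn
    refine ⟨fun x y => if f s(x, y) then 1 else 0, ?_, ?_, ?_⟩
    · intro x y; simp only []; rw [Sym2.eq_swap]
    · intro x y; by_cases h : f s(x, y) <;> simp [h]
    · intro A B
      have hd : weightSum (fun x y => if f s(x, y) then (1:ℝ) else 0) A B - weightSum w A B
          = ∑ x ∈ A, ∑ y ∈ B, ((if f s(x, y) then (1:ℝ) else 0) - ω s(x, y)) := by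
        unfold weightSum
        rw [← Finset.sum_sub_distrib]
        refine Finset.sum_congr rfl fun x _ => ?_
        rw [← Finset.sum_sub_distrib]
        exact Finset.sum_congr rfl fun y _ => by rw [hωmk]
      rw [hd, UAppx.dev_eq ω f A B]
      exact hf A B
  · push_neg at hn
    refine ⟨fun _ _ => 0, fun _ _ => rfl, fun _ _ => Or.inl rfl, ?_⟩
    intro A B
    have hw0 : weightSum (fun _ _ => (0:ℝ)) A B = 0 := by unfold weightSum; simp
    rw [hw0, zero_sub, abs_neg]
    have hnonneg : 0 ≤ weightSum w A B :=
      Finset.sum_nonneg fun x _ => Finset.sum_nonneg fun y _ => h0 x y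
    rw [abs_of_nonneg hnonneg]
    have hcase : Fintype.card V = 0 ∨ Fintype.card V = 1 := by omega
    rcases hcase with h | h
    · have : IsEmpty V := Fintype.card_eq_zero_iff.mp h
      have hA : A = ∅ := Finset.eq_empty_of_isEmpty A
      rw [hA]
      unfold weightSum
      rw [h]
      simp [Real.zero_rpow (by norm_num : ((3:ℝ)/2) ≠ 0)]
    · have hub : weightSum w A B ≤ (A.card : ℝ) * B.card := by
        unfold weightSum
        calc ∑ x ∈ A, ∑ y ∈ B, w x y ≤ ∑ x ∈ A, ∑ y ∈ B, (1:ℝ) :=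
            Finset.sum_le_sum fun x _ => Finset.sum_le_sum fun y _ => h1 x y
          _ = (A.card : ℝ) * B.card := by simp [mul_comm]
      have hAle : A.card ≤ 1 := by
        have := Finset.card_le_univ A
        omega
      have hBle : B.card ≤ 1 := by
        have := Finset.card_le_univ B
        omega
      have hA' : (A.card : ℝ) ≤ 1 := by exact_mod_cast hAle
      have hB' : (B.card : ℝ) ≤ 1 := by exact_mod_cast hBle
      have hA0 : (0:ℝ) ≤ A.card := Nat.cast_nonneg _
      have hB0 : (0:ℝ) ≤ B.card := Nat.cast_nonneg _
      rw [h]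
      have : ((1:ℕ) : ℝ) ^ ((3:ℝ)/2) = 1 := by
        rw [Nat.cast_one, Real.one_rpow]
      rw [this]
      nlinarith
end

section
/- Define a sequence of natural numbers by k_0 = 1 and k_{i+1} = k_i·2^{k_i + 1} for i ≥ 0, and let T be the tower function defined by T(1) = 2 and T(n+1) = 2^{T(n)}. Then for every i ≥ 0, k_i ≤ T(i+2)/4. -/
lemma tower_ge_two (n : ℕ) : 2 ≤ tower (n + 1) := by
  induction n with
  | zero => simp [tower]
  | succ m ih =>
    calc 2 ≤ 2 ^ 2 := by norm_num
    _ ≤ 2 ^ tower (m + 1) := Nat.pow_le_pow_right (by norm_num) ih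
    _ = tower (m + 2) := rfl

lemma two_mul_le_tower (n : ℕ) : 2 * tower (n + 1) ≤ tower (n + 2) := by
  have h := tower_ge_two n
  have : 2 * tower (n + 1) ≤ 2 ^ tower (n + 1) := by
    have := Nat.lt_two_pow_self (n := tower (n + 1))
    calc 2 * tower (n+1) = tower (n+1) + tower (n+1) := by ring
    _ ≤ 2^(tower (n+1) - 1) * 2 := by
        have h1 : tower (n+1) ≤ 2 ^ (tower (n+1) - 1) := Nat.le_of_lt_succ (by
          have := Nat.lt_two_pow_self (n := tower (n+1) - 1)
          omega)
        omega
    _ = 2 ^ (tower (n+1) - 1 + 1) := by rw [pow_succ]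
    _ = 2 ^ tower (n+1) := by congr 1; omega
  exact this

lemma key (k : ℕ → ℕ) (h0 : k 0 = 1)
    (hrec : ∀ i, k (i + 1) = k i * 2 ^ (k i + 1)) (i : ℕ) :
    4 * k i ≤ tower (i + 2) := by
  induction i with
  | zero => simp [h0, tower]
  | succ m ih =>
    have h2 : 2 * tower (m + 1) ≤ tower (m + 2) := two_mul_le_tower m
    have h4 : 4 ≤ tower (m + 2) := by
      have := tower_ge_two m; omega
    have hexp : tower (m + 1) + (k m + 1) ≤ tower (m + 2) := by omega
    calc 4 * k (m + 1) = (4 * k m) * 2 ^ (k m + 1) := by rw [hrec]; ring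
    _ ≤ tower (m + 2) * 2 ^ (k m + 1) := Nat.mul_le_mul_right _ ih
    _ = 2 ^ (tower (m + 1) + (k m + 1)) := by show (2:ℕ)^tower (m+1) * _ = _; rw [← pow_add]
    _ ≤ 2 ^ tower (m + 2) := Nat.pow_le_pow_right (by norm_num) hexp
    _ = tower (m + 3) := rfl

/-- If `k 0 = 1` and `k (i+1) = k i · 2^(k i + 1)`, then `k i ≤ tower (i+2) / 4` for all
`i ≥ 0`. -/
theorem iterated_exponential_le_tower (k : ℕ → ℕ) (h0 : k 0 = 1)
    (hrec : ∀ i, k (i + 1) = k i * 2 ^ (k i + 1)) (i : ℕ) :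
    (k i : ℝ) ≤ (tower (i + 2) : ℝ) / 4 := by
  have h := key k h0 hrec i
  have : (4 * k i : ℝ) ≤ (tower (i + 2) : ℝ) := by exact_mod_cast h
  linarith
end
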